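/- If f ∈ M = φK_θ ⊕ ψK_θ is written as f = φk₁ + ψk₂ with k₁, k₂ ∈ K_θ, then C_M f = ψ C_θ k₁ + φ C_θ k₂, where C_M f = θφψ z̄ f̄ and C_θ k = θ z̄ k̄. In particular C_M f ∈ M. -/

import Mathlib

open MeasureTheory Complex Submodule

noncomputable section

namespace DualBand

/-- Haar (normalized Lebesgue) measure on the unit circle, realized additively. -/
abbrev μ : Measure UnitAddCircle := AddCircle.haarAddCircle

/-- The Lebesgue space L² of the unit circle. -/
abbrev L2 : Type := Lp ℂ 2 μ

lemma mul_memLp (φ : UnitAddCircle →ₘ[μ] ℂ) (hφ : ∀ᵐ x ∂μ, ‖φ x‖ = 1) (f : L2) :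
    MemLp (fun x => φ x * f x) 2 μ := by
  refine ⟨φ.aestronglyMeasurable.mul (Lp.aestronglyMeasurable f), ?_⟩
  have h : eLpNorm (fun x => φ x * f x) 2 μ = eLpNorm f 2 μ := by
    refine eLpNorm_congr_norm_ae ?_
    filter_upwards [hφ] with x hx
    simp [norm_mul, hx]
  rw [h]
  exact Lp.eLpNorm_lt_top f

/-- Multiplication by an a.e. unimodular measurable function, as a linear map on L². -/
def mulOp (φ : UnitAddCircle →ₘ[μ] ℂ) (hφ : ∀ᵐ x ∂μ, ‖φ x‖ = 1) : L2 →ₗ[ℂ] L2 where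
  toFun f := (mul_memLp φ hφ f).toLp _
  map_add' f g := by
    refine Lp.ext ?_
    filter_upwards [MemLp.coeFn_toLp (mul_memLp φ hφ (f + g)),
      MemLp.coeFn_toLp (mul_memLp φ hφ f), MemLp.coeFn_toLp (mul_memLp φ hφ g),
      Lp.coeFn_add f g,
      Lp.coeFn_add ((mul_memLp φ hφ f).toLp _) ((mul_memLp φ hφ g).toLp _)]
      with x h1 h2 h3 h4 h5
    rw [h1, h5, Pi.add_apply, h2, h3, h4, Pi.add_apply]
    ring
  map_smul' c f := by
    refine Lp.ext ?_
    filter_upwards [MemLp.coeFn_toLp (mul_memLp φ hφ (c • f)),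
      MemLp.coeFn_toLp (mul_memLp φ hφ f),
      Lp.coeFn_smul c f,
      Lp.coeFn_smul c ((mul_memLp φ hφ f).toLp _)]
      with x h1 h2 h3 h4
    rw [h1, RingHom.id_apply, h4, Pi.smul_apply, h2, h3, Pi.smul_apply]
    simp [smul_eq_mul]
    ring

/-- Complex conjugation of an a.e.-defined function. -/
def conjAE (φ : UnitAddCircle →ₘ[μ] ℂ) : UnitAddCircle →ₘ[μ] ℂ :=
  AEEqFun.comp (starRingEnd ℂ) RCLike.continuous_conj φ

lemma conj_memLp (f : L2) : MemLp (fun x => (starRingEnd ℂ) (f x)) 2 μ := by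
  refine ⟨RCLike.continuous_conj.comp_aestronglyMeasurable (Lp.aestronglyMeasurable f), ?_⟩
  have h : eLpNorm (fun x => (starRingEnd ℂ) (f x)) 2 μ = eLpNorm f 2 μ :=
    eLpNorm_congr_norm_ae (Filter.Eventually.of_forall fun x => by simp)
  rw [h]
  exact Lp.eLpNorm_lt_top f

/-- Pointwise complex conjugation on L². -/
def conjL2 (f : L2) : L2 := (conj_memLp f).toLp _

/-- The conjugate z̄ of the coordinate function, as an a.e.-defined function. -/
def zbar : UnitAddCircle →ₘ[μ] ℂ :=
  AEEqFun.mk (⇑(fourier (T := 1) (-1)))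
    ((fourier (T := 1) (-1)).continuous.aestronglyMeasurable)

/-- The Hardy space H² inside L², as the closed span of the nonnegative Fourier modes. -/
def H2 : Submodule ℂ L2 :=
  (Submodule.span ℂ (Set.range fun n : ℕ => (fourierLp 2 (n : ℤ) : L2))).topologicalClosure

/-- The model space K_θ = H² ⊖ θH². -/
def modelSpace (θ : UnitAddCircle →ₘ[μ] ℂ) (hθ : ∀ᵐ x ∂μ, ‖θ x‖ = 1) : Submodule ℂ L2 :=
  H2 ⊓ (H2.map (mulOp θ hθ))ᗮ

lemma modelSpace_isClosed (θ : UnitAddCircle →ₘ[μ] ℂ) (hθ : ∀ᵐ x ∂μ, ‖θ x‖ = 1) :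
    IsClosed ((modelSpace θ hθ : Set L2)) := by
  have h1 : (modelSpace θ hθ : Set L2)
      = (H2 : Set L2) ∩ ((H2.map (mulOp θ hθ))ᗮ : Set L2) := rfl
  rw [h1]
  exact (Submodule.isClosed_topologicalClosure _).inter
    (Submodule.isClosed_orthogonal (H2.map (mulOp θ hθ)))

instance (θ : UnitAddCircle →ₘ[μ] ℂ) (hθ : ∀ᵐ x ∂μ, ‖θ x‖ = 1) :
    CompleteSpace (modelSpace θ hθ) :=
  (modelSpace_isClosed θ hθ).completeSpace_coe


section Aux

local notation "⟪" x ", " y "⟫" => @inner ℂ L2 _ x y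

lemma mulOp_coeFn (φ : UnitAddCircle →ₘ[μ] ℂ) (hφ : ∀ᵐ x ∂μ, ‖φ x‖ = 1) (f : L2) :
    mulOp φ hφ f =ᵐ[μ] fun x => φ x * f x := (mul_memLp φ hφ f).coeFn_toLp

lemma conjL2_coeFn (f : L2) :
    conjL2 f =ᵐ[μ] fun x => (starRingEnd ℂ) (f x) := (conj_memLp f).coeFn_toLp

lemma zbar_coeFn : ⇑zbar =ᵐ[μ] fun x => fourier (-1) x := AEEqFun.coeFn_mk _ _

lemma unimod_mul_conj {z : ℂ} (h : ‖z‖ = 1) : z * (starRingEnd ℂ) z = 1 := by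
  rw [RCLike.mul_conj, h]; norm_num

lemma unimod_conj_mul {z : ℂ} (h : ‖z‖ = 1) : (starRingEnd ℂ) z * z = 1 := by
  rw [mul_comm]; exact unimod_mul_conj h

lemma mulOp_norm (φ : UnitAddCircle →ₘ[μ] ℂ) (hφ : ∀ᵐ x ∂μ, ‖φ x‖ = 1) (f : L2) :
    ‖mulOp φ hφ f‖ = ‖f‖ := by
  rw [Lp.norm_def, Lp.norm_def]
  congr 1
  rw [eLpNorm_congr_ae (mulOp_coeFn φ hφ f)]
  refine eLpNorm_congr_norm_ae ?_
  filter_upwards [hφ] with x hx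
  simp [hx]

/-- Multiplication by a unimodular function as a continuous linear map. -/
def mulCLM (φ : UnitAddCircle →ₘ[μ] ℂ) (hφ : ∀ᵐ x ∂μ, ‖φ x‖ = 1) : L2 →L[ℂ] L2 :=
  (mulOp φ hφ).mkContinuous 1 fun f => by rw [mulOp_norm, one_mul]

lemma mulCLM_apply (φ : UnitAddCircle →ₘ[μ] ℂ) (hφ : ∀ᵐ x ∂μ, ‖φ x‖ = 1) (f : L2) :
    mulCLM φ hφ f = mulOp φ hφ f := rfl

lemma inner_eq_integral (f g : L2) :
    ⟪f, g⟫ = ∫ x, (starRingEnd ℂ) (f x) * g x ∂μ := by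
  rw [MeasureTheory.L2.inner_def]
  simp [RCLike.inner_apply]
  exact integral_congr_ae (Filter.Eventually.of_forall fun x => mul_comm _ _)

lemma fourierLp_mem_H2 (n : ℤ) (hn : 0 ≤ n) : (fourierLp 2 n : L2) ∈ H2 := by
  apply Submodule.le_topologicalClosure
  apply Submodule.subset_span
  refine ⟨n.toNat, ?_⟩
  show fourierLp 2 ((n.toNat : ℕ) : ℤ) = fourierLp 2 n
  rw [Int.toNat_of_nonneg hn]

lemma inner_fourier_zero_of_mem_H2 {g : L2} (hg : g ∈ H2) {n : ℤ} (hn : n < 0) :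
    ⟪(fourierLp 2 n : L2), g⟫ = 0 := by
  have hker : H2 ≤ LinearMap.ker ((innerSL ℂ ((fourierLp 2 n : L2))) : L2 →ₗ[ℂ] ℂ) := by
    refine Submodule.topologicalClosure_minimal _ ?_
      (ContinuousLinearMap.isClosed_ker ((innerSL ℂ ((fourierLp 2 n : L2))) : L2 →L[ℂ] ℂ))
    rw [Submodule.span_le]
    rintro _ ⟨m, rfl⟩
    simp only [SetLike.mem_coe, LinearMap.mem_ker, innerSL_apply_apply]
    rw [← coe_fourierBasis]
    exact fourierBasis.orthonormal.2 (by omega)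
  simpa using hker hg

lemma mem_H2_of_inner {g : L2} (h : ∀ n : ℤ, n < 0 → ⟪(fourierLp 2 n : L2), g⟫ = 0) :
    g ∈ H2 := by
  have hs : HasSum (fun i : ℤ => fourierBasis.repr g i • (fourierBasis i : L2)) g :=
    fourierBasis.hasSum_repr g
  have hcl : g ∈ closure
      ((Submodule.span ℂ (Set.range fun n : ℕ => (fourierLp 2 (n : ℤ) : L2))) : Set L2) := by
    refine mem_closure_of_tendsto hs (Filter.Eventually.of_forall fun s => ?_)
    refine SetLike.mem_coe.2 (Submodule.sum_mem _ fun i _ => ?_)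
    rcases lt_or_ge i 0 with hi | hi
    · have hz : fourierBasis.repr g i = 0 := by
        rw [fourierBasis.repr_apply_apply, coe_fourierBasis]
        exact h i hi
      simp [hz]
    · refine Submodule.smul_mem _ _ (Submodule.subset_span ?_)
      refine ⟨i.toNat, ?_⟩
      show fourierLp 2 ((i.toNat : ℕ) : ℤ) = fourierBasis i
      rw [coe_fourierBasis, Int.toNat_of_nonneg hi]
  rw [← SetLike.mem_coe, H2, Submodule.topologicalClosure_coe]
  exact hcl

/-- The model-space conjugation maps `K_θ` into `K_θ`. -/
lemma conjOp_mem_modelSpace (θ : UnitAddCircle →ₘ[μ] ℂ) (hθu : ∀ᵐ x ∂μ, ‖θ x‖ = 1)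
    (hθz : ∀ᵐ x ∂μ, ‖(θ * zbar) x‖ = 1) {k : L2} (hk : k ∈ modelSpace θ hθu) :
    mulOp (θ * zbar) hθz (conjL2 k) ∈ modelSpace θ hθu := by
  obtain ⟨hk1, hk2⟩ := Submodule.mem_inf.1 hk
  set g : L2 := mulOp (θ * zbar) hθz (conjL2 k) with hgdef
  have hgx : ⇑g =ᵐ[μ] fun x => θ x * fourier (-1) x * (starRingEnd ℂ) (k x) := by
    filter_upwards [mulOp_coeFn (θ * zbar) hθz (conjL2 k), conjL2_coeFn k,
      AEEqFun.coeFn_mul θ zbar, zbar_coeFn] with x h1 h2 h3 h4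
    rw [h1, h2, h3, Pi.mul_apply, h4]
  refine Submodule.mem_inf.2 ⟨?_, ?_⟩
  · apply mem_H2_of_inner
    intro n hn
    have key : ⟪(fourierLp 2 n : L2), g⟫
        = (starRingEnd ℂ) ⟪mulOp θ hθu (fourierLp 2 (-n - 1) : L2), k⟫ := by
      rw [inner_eq_integral, inner_eq_integral, ← integral_conj]
      refine integral_congr_ae ?_
      filter_upwards [hgx, coeFn_fourierLp 2 n, coeFn_fourierLp 2 (-n - 1),
        mulOp_coeFn θ hθu (fourierLp 2 (-n - 1))] with x h1 h2 h3 h4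
      rw [h1, h2, h4, h3]
      simp only [map_mul, Complex.conj_conj]
      have hf : fourier (-n) x * fourier (-1) x = fourier (-n - 1) x := by
        rw [show (-n - 1 : ℤ) = -n + -1 by ring, fourier_add]
      rw [← fourier_neg (n := n)]
      linear_combination (θ x * (starRingEnd ℂ) (k x)) * hf
    have hmem : mulOp θ hθu (fourierLp 2 (-n - 1) : L2) ∈ H2.map (mulOp θ hθu) :=
      ⟨_, fourierLp_mem_H2 _ (by omega), rfl⟩
    rw [key, (Submodule.mem_orthogonal _ k).1 hk2 _ hmem, map_zero]
  · rw [Submodule.mem_orthogonal]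
    rintro u hu
    obtain ⟨h, hh, rfl⟩ := Submodule.mem_map.1 hu
    have main : H2 ≤ LinearMap.ker (((innerSL ℂ g).comp (mulCLM θ hθu)) : L2 →ₗ[ℂ] ℂ) := by
      refine Submodule.topologicalClosure_minimal _ ?_
        (ContinuousLinearMap.isClosed_ker (((innerSL ℂ g).comp (mulCLM θ hθu)) : L2 →L[ℂ] ℂ))
      rw [Submodule.span_le]
      rintro _ ⟨m, rfl⟩
      simp only [SetLike.mem_coe, LinearMap.mem_ker, ContinuousLinearMap.coe_coe, ContinuousLinearMap.coe_comp',
        Function.comp_apply, innerSL_apply_apply, mulCLM_apply]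
      have key2 : ⟪g, mulOp θ hθu (fourierLp 2 (m : ℤ) : L2)⟫
          = ⟪(fourierLp 2 (-(m : ℤ) - 1) : L2), k⟫ := by
        rw [inner_eq_integral, inner_eq_integral]
        refine integral_congr_ae ?_
        filter_upwards [hgx, coeFn_fourierLp 2 (m : ℤ), coeFn_fourierLp 2 (-(m : ℤ) - 1),
          mulOp_coeFn θ hθu (fourierLp 2 (m : ℤ)), hθu] with x h1 h2 h3 h4 h5
        rw [h1, h4, h2, h3]
        simp only [map_mul, Complex.conj_conj]
        have ht : (starRingEnd ℂ) (θ x) * θ x = 1 := unimod_conj_mul h5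
        have hf1 : (starRingEnd ℂ) (fourier (-1) x) = fourier (1 : ℤ) x := by
          rw [show (-1 : ℤ) = -(1 : ℤ) by ring, fourier_neg, Complex.conj_conj]
        have hf2 : (starRingEnd ℂ) (fourier (-(m : ℤ) - 1) x) = fourier ((m : ℤ) + 1) x := by
          rw [show (-(m : ℤ) - 1) = -((m : ℤ) + 1) by ring, fourier_neg, Complex.conj_conj]
        have hf3 : fourier (1 : ℤ) x * fourier (m : ℤ) x = fourier ((m : ℤ) + 1) x := by
          rw [show ((m : ℤ) + 1) = 1 + (m : ℤ) by ring, fourier_add]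
        rw [hf1, hf2]
        linear_combination (fourier (1 : ℤ) x * fourier (m : ℤ) x * k x) * ht + k x * hf3
      rw [key2]
      exact inner_fourier_zero_of_mem_H2 hk1 (by omega)
    have h0 : ⟪g, mulOp θ hθu h⟫ = 0 := by
      have := main hh
      simpa [mulCLM_apply] using this
    rw [← inner_conj_symm, h0, map_zero]

end Aux

/-- If f ∈ M = φK_θ ⊕ ψK_θ is written f = φk₁ + ψk₂ with k₁, k₂ ∈ K_θ, then
C_M f = ψ C_θ k₁ + φ C_θ k₂, where C_M f = θφψz̄f̄ and C_θ k = θz̄k̄.  In particular C_M f ∈ M. -/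
theorem statement3 (θ φ ψ : UnitAddCircle →ₘ[μ] ℂ)
    (hθu : ∀ᵐ x ∂μ, ‖θ x‖ = 1)
    (hθinner : ∀ f ∈ H2, mulOp θ hθu f ∈ H2)
    (hφ : ∀ᵐ x ∂μ, ‖φ x‖ = 1) (hψ : ∀ᵐ x ∂μ, ‖ψ x‖ = 1)
    (horth : ((modelSpace θ hθu).map (mulOp φ hφ)) ⟂ ((modelSpace θ hθu).map (mulOp ψ hψ)))
    (hprod : ∀ᵐ x ∂μ, ‖(θ * φ * ψ * zbar) x‖ = 1)
    (hθz : ∀ᵐ x ∂μ, ‖(θ * zbar) x‖ = 1)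
    (f : L2) (k₁ k₂ : L2)
    (hk₁ : k₁ ∈ modelSpace θ hθu) (hk₂ : k₂ ∈ modelSpace θ hθu)
    (hf : f = mulOp φ hφ k₁ + mulOp ψ hψ k₂) :
    mulOp (θ * φ * ψ * zbar) hprod (conjL2 f)
      = mulOp ψ hψ (mulOp (θ * zbar) hθz (conjL2 k₁))
        + mulOp φ hφ (mulOp (θ * zbar) hθz (conjL2 k₂)) ∧
    (∃ m₁ ∈ modelSpace θ hθu, ∃ m₂ ∈ modelSpace θ hθu,
        mulOp (θ * φ * ψ * zbar) hprod (conjL2 f) = mulOp φ hφ m₁ + mulOp ψ hψ m₂) := by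
  have hCk1 := conjOp_mem_modelSpace θ hθu hθz hk₁
  have hCk2 := conjOp_mem_modelSpace θ hθu hθz hk₂
  have hmain : mulOp (θ * φ * ψ * zbar) hprod (conjL2 f)
      = mulOp ψ hψ (mulOp (θ * zbar) hθz (conjL2 k₁))
        + mulOp φ hφ (mulOp (θ * zbar) hθz (conjL2 k₂)) := by
    subst hf
    refine Lp.ext ?_
    filter_upwards [mulOp_coeFn _ hprod (conjL2 (mulOp φ hφ k₁ + mulOp ψ hψ k₂)),
      conjL2_coeFn (mulOp φ hφ k₁ + mulOp ψ hψ k₂),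
      Lp.coeFn_add (mulOp φ hφ k₁) (mulOp ψ hψ k₂),
      mulOp_coeFn φ hφ k₁, mulOp_coeFn ψ hψ k₂,
      Lp.coeFn_add (mulOp ψ hψ (mulOp (θ * zbar) hθz (conjL2 k₁)))
        (mulOp φ hφ (mulOp (θ * zbar) hθz (conjL2 k₂))),
      mulOp_coeFn ψ hψ (mulOp (θ * zbar) hθz (conjL2 k₁)),
      mulOp_coeFn φ hφ (mulOp (θ * zbar) hθz (conjL2 k₂)),
      mulOp_coeFn (θ * zbar) hθz (conjL2 k₁), mulOp_coeFn (θ * zbar) hθz (conjL2 k₂),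
      conjL2_coeFn k₁, conjL2_coeFn k₂,
      AEEqFun.coeFn_mul (θ * φ * ψ) zbar, AEEqFun.coeFn_mul (θ * φ) ψ,
      AEEqFun.coeFn_mul θ φ, AEEqFun.coeFn_mul θ zbar,
      hφ, hψ] with x h1 h2 h3 h4 h5 h6 h7 h8 h9 h10 h11 h12 h13 h14 h15 h16 hx1 hx2
    rw [h1, h2, h3, Pi.add_apply, h4, h5, h6, Pi.add_apply, h7, h8, h9, h10, h11, h12,
      h13, Pi.mul_apply, h14, Pi.mul_apply, h15, Pi.mul_apply, h16, Pi.mul_apply]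
    simp only [map_add, map_mul]
    have e1 : φ x * (starRingEnd ℂ) (φ x) = 1 := unimod_mul_conj hx1
    have e2 : ψ x * (starRingEnd ℂ) (ψ x) = 1 := unimod_mul_conj hx2
    linear_combination (θ x * ψ x * zbar x * (starRingEnd ℂ) (k₁ x)) * e1
      + (θ x * φ x * zbar x * (starRingEnd ℂ) (k₂ x)) * e2
  refine ⟨hmain, mulOp (θ * zbar) hθz (conjL2 k₂), hCk2,
    mulOp (θ * zbar) hθz (conjL2 k₁), hCk1, ?_⟩
  rw [hmain, add_comm]

end DualBand
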